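/- Define signed eigenvalues e(λ) by the Renteln recurrence: e(∅) = 1 and e(λ) = (−1)^h·e(λ − ĥ) + (−1)^{h+λ₁}·h·e(λ − ĉ), where ĥ is the hook of λ (first row and first column, of size h = λ₁ + r − 1 for λ with r parts), λ − ĥ is λ with its hook removed, and λ − ĉ is λ with its first column removed. Then for every partition λ = (λ₁,…,λ_r) of n ≥ 2, the sign of e(λ) equals (−1)^{n − λ₁}, i.e., e(λ) is nonzero and positive iff n − λ₁ is even. -/

import Mathlib

def colErase (l : List ℕ) : List ℕ := (l.map (· - 1)).filter (· ≠ 0)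

def IsPartition (l : List ℕ) : Prop := l.Pairwise (· ≥ ·) ∧ ∀ x ∈ l, 0 < x

namespace SignProof


theorem part_tail {l : List ℕ} (h : IsPartition l) : IsPartition l.tail := by
  obtain ⟨hs, hpos⟩ := h
  cases l with
  | nil => exact ⟨List.Pairwise.nil, by simp⟩
  | cons a t =>
    rw [List.pairwise_cons] at hs
    exact ⟨hs.2, fun x hx => hpos x (List.mem_cons_of_mem a hx)⟩

theorem part_drop {l : List ℕ} (h : IsPartition l) (j : ℕ) : IsPartition (l.drop j) := by
  induction j with
  | zero => simpa using h
  | succ j ih => rw [← List.tail_drop]; exact part_tail ih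

theorem le_head {l : List ℕ} (h : IsPartition l) : ∀ x ∈ l, x ≤ l.headD 0 := by
  cases l with
  | nil => simp
  | cons a t =>
    intro x hx
    rcases List.mem_cons.mp hx with rfl | hx
    · simp
    · exact (List.pairwise_cons.mp h.1).1 x hx

theorem head_mem {l : List ℕ} (hne : l ≠ []) : l.headD 0 ∈ l := by
  cases l with
  | nil => simp at hne
  | cons a t => simp

theorem head_pos {l : List ℕ} (h : IsPartition l) (hne : l ≠ []) : 1 ≤ l.headD 0 :=
  h.2 _ (head_mem hne)

theorem head_tail_le {l : List ℕ} (h : IsPartition l) : l.tail.headD 0 ≤ l.headD 0 := by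
  cases l with
  | nil => simp
  | cons a t =>
    cases t with
    | nil => simp
    | cons b t' => exact le_head h _ (by simp)

theorem length_le_sum {l : List ℕ} (h : IsPartition l) : l.length ≤ l.sum := by
  induction l with
  | nil => simp
  | cons a t ih =>
    have ha : 1 ≤ a := h.2 a (by simp)
    have := ih (part_tail h)
    simp only [List.length_cons, List.sum_cons]
    omega

theorem headD_le_sum (l : List ℕ) : l.headD 0 ≤ l.sum := by
  cases l with
  | nil => simp
  | cons a t => simp only [List.headD_cons, List.sum_cons]; omega

theorem hook_le {l : List ℕ} (h : IsPartition l) : l.headD 0 + l.length ≤ l.sum + 1 := by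
  cases l with
  | nil => simp
  | cons a t =>
    have := length_le_sum (part_tail h)
    simp only [List.headD_cons, List.length_cons, List.sum_cons] at *
    simp only [List.tail_cons] at this
    omega

theorem sum_tail {l : List ℕ} : l.sum = l.headD 0 + l.tail.sum := by
  cases l <;> simp

theorem sum_drop_le (l : List ℕ) (j : ℕ) : (l.drop j).sum ≤ l.sum := by
  induction j with
  | zero => simp
  | succ j ih =>
    rw [← List.tail_drop]
    calc (l.drop j).tail.sum ≤ (l.drop j).sum := by
            rw [@sum_tail (l.drop j)]; omega
      _ ≤ l.sum := ih

theorem sum_drop_lt {l : List ℕ} (h : IsPartition l) (hne : l ≠ []) {j : ℕ} (hj : 1 ≤ j) :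
    (l.drop j).sum < l.sum := by
  have h1 : (l.drop j).sum ≤ l.tail.sum := by
    have : l.drop j = l.tail.drop (j-1) := by
      rw [List.drop_tail]
      congr 1
      omega
    rw [this]
    exact sum_drop_le _ _
  have := head_pos h hne
  have := @sum_tail l
  omega

theorem sum_eq_zero {l : List ℕ} (h : IsPartition l) (h0 : l.sum = 0) : l = [] := by
  cases l with
  | nil => rfl
  | cons a t =>
    have := h.2 a (by simp)
    simp at h0
    omega

theorem sum_eq_one {l : List ℕ} (h : IsPartition l) (h1 : l.sum = 1) : l = [1] := by
  cases l with
  | nil => simp at h1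
  | cons a t =>
    have ha := h.2 a (by simp)
    simp only [List.sum_cons] at h1
    have ht : t.sum = 0 := by omega
    have : t = [] := sum_eq_zero (part_tail h) ht
    subst this
    simp at h1 ⊢
    omega

theorem colErase_nil : colErase [] = [] := rfl

theorem all_ones {l : List ℕ} (h : IsPartition l) (h1 : l.headD 0 ≤ 1) : ∀ x ∈ l, x = 1 := by
  intro x hx
  have := h.2 x hx
  have := le_head h x hx
  omega

theorem colErase_ones {l : List ℕ} (h : ∀ x ∈ l, x = 1) : colErase l = [] := by
  rw [colErase, List.filter_eq_nil_iff]
  intro y hy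
  obtain ⟨x, hx, rfl⟩ := List.mem_map.mp hy
  simp [h x hx]

theorem colErase_cons {a : ℕ} {t : List ℕ} (ha : 2 ≤ a) :
    colErase (a :: t) = (a - 1) :: colErase t := by
  rw [colErase, List.map_cons, List.filter_cons_of_pos (by simp; omega)]
  rfl

theorem colErase_part {l : List ℕ} (h : IsPartition l) : IsPartition (colErase l) := by
  constructor
  · apply List.Pairwise.filter
    exact List.Pairwise.map _ (fun a b hab => Nat.sub_le_sub_right hab 1) h.1
  · intro x hx
    have := List.of_mem_filter hx
    simp only [ne_eq, decide_not, Bool.not_eq_true', decide_eq_false_iff_not] at this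
    omega

theorem colErase_tail {l : List ℕ} (h : IsPartition l) :
    colErase l.tail = (colErase l).tail := by
  cases l with
  | nil => rfl
  | cons a t =>
    by_cases ha : 2 ≤ a
    · rw [List.tail_cons, colErase_cons ha, List.tail_cons]
    · have h1 : (a :: t).headD 0 ≤ 1 := by simp; omega
      rw [colErase_ones (all_ones h h1), List.tail_cons,
        colErase_ones (fun x hx => all_ones h h1 x (List.mem_cons_of_mem a hx))]
      rfl

theorem colErase_drop {l : List ℕ} (h : IsPartition l) (j : ℕ) :
    colErase (l.drop j) = (colErase l).drop j := by
  induction j with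
  | zero => simp
  | succ j ih =>
    rw [← List.tail_drop, colErase_tail (part_drop h j), ih, List.tail_drop]

theorem colErase_head {l : List ℕ} (h : IsPartition l) :
    (colErase l).headD 0 = l.headD 0 - 1 := by
  cases l with
  | nil => rfl
  | cons a t =>
    by_cases ha : 2 ≤ a
    · rw [colErase_cons ha]; rfl
    · rw [colErase_ones (all_ones h (by simp; omega))]
      simp
      omega

theorem filter_ne_zero_sum (m : List ℕ) : (m.filter (· ≠ 0)).sum = m.sum := by
  induction m with
  | nil => rfl
  | cons a t ih =>
    by_cases ha : a = 0
    · subst ha; simpa using ih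
    · rw [List.filter_cons_of_pos (by simpa using ha)]
      simpa using ih

theorem colErase_sum {l : List ℕ} (h : IsPartition l) :
    (colErase l).sum = l.sum - l.length := by
  rw [colErase, filter_ne_zero_sum]
  induction l with
  | nil => rfl
  | cons a t ih =>
    have ha : 1 ≤ a := h.2 a (by simp)
    have h2 := length_le_sum (part_tail h)
    simp only [List.tail_cons] at h2
    have := ih (part_tail h)
    simp only [List.map_cons, List.sum_cons, List.length_cons] at *
    omega

def gv (e : List ℕ → ℤ) (l : List ℕ) : ℤ := (-1) ^ (l.sum - l.headD 0) * e l

theorem negpow {a b : ℕ} (h : a % 2 = b % 2) : ((-1 : ℤ)) ^ a = (-1) ^ b := by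
  rw [← Nat.div_add_mod a 2, ← Nat.div_add_mod b 2, pow_add, pow_add, pow_mul, pow_mul, h]
  norm_num

theorem ones_sum {l : List ℕ} (h : ∀ x ∈ l, x = 1) : l.sum = l.length := by
  induction l with
  | nil => rfl
  | cons a t ih =>
    simp only [List.sum_cons, List.length_cons, h a (by simp),
      ih (fun x hx => h x (List.mem_cons_of_mem a hx))]
    omega

theorem ne_nil_of_headD {l : List ℕ} (h : 1 ≤ l.headD 0) : l ≠ [] := by
  intro hl; subst hl; simp at h

theorem headD_drop_le {l : List ℕ} (h : IsPartition l) (j : ℕ) :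
    (l.drop j).headD 0 ≤ l.headD 0 := by
  by_cases hd : l.drop j = []
  · simp [hd]
  · exact le_head h _ (List.mem_of_mem_drop (head_mem hd))

theorem pm (k : ℕ) : ((-1 : ℤ)) ^ k = 1 ∧ k % 2 = 0 ∨ ((-1 : ℤ)) ^ k = -1 ∧ k % 2 = 1 := by
  rcases Nat.even_or_odd k with hk | hk
  · exact Or.inl ⟨hk.neg_one_pow, Nat.even_iff.mp hk⟩
  · exact Or.inr ⟨hk.neg_one_pow, Nat.odd_iff.mp hk⟩

section
variable {e : List ℕ → ℤ} (h0 : e [] = 1)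
    (hrec : ∀ l : List ℕ, IsPartition l → l ≠ [] →
      e l = (-1) ^ (l.headD 0 + l.length - 1) * e (colErase l.tail)
        + (-1) ^ (l.headD 0 + l.length - 1 + l.headD 0)
          * ((l.headD 0 + l.length - 1 : ℕ) : ℤ) * e (colErase l))
include h0 hrec



theorem gv_nil : gv e [] = 1 := by simp [gv, h0]

theorem grec {l : List ℕ} (hp : IsPartition l) (hne : l ≠ []) :
    gv e l = ((l.headD 0 + l.length - 1 : ℕ) : ℤ) * gv e (colErase l)
      + (-1) ^ (l.headD 0 + (colErase l.tail).headD 0) * gv e (colErase l.tail) := by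
  have ha : 1 ≤ l.headD 0 := head_pos hp hne
  have hr : 1 ≤ l.length := by
    cases l; · simp at hne
    · simp
  have han : l.headD 0 ≤ l.sum := headD_le_sum l
  have hhook : l.headD 0 + l.length ≤ l.sum + 1 := hook_le hp
  have hrn : l.length ≤ l.sum := length_le_sum hp
  -- facts about μ
  have hμs : (colErase l).sum = l.sum - l.length := colErase_sum hp
  have hμh : (colErase l).headD 0 = l.headD 0 - 1 := colErase_head hp
  have hμhs : (colErase l).headD 0 ≤ (colErase l).sum := headD_le_sum _
  -- facts about μt
  have htp : IsPartition l.tail := part_tail hp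
  have hts : l.tail.sum = l.sum - l.headD 0 := by have := @sum_tail l; omega
  have htl : l.tail.length = l.length - 1 := by
    cases l; · simp at hne
    · simp
  have htls : l.tail.length ≤ l.tail.sum := length_le_sum htp
  have hμts : (colErase l.tail).sum = l.tail.sum - l.tail.length := colErase_sum htp
  have hμth : (colErase l.tail).headD 0 = l.tail.headD 0 - 1 := colErase_head htp
  have hμths : (colErase l.tail).headD 0 ≤ (colErase l.tail).sum := headD_le_sum _
  have id1 : (-1 : ℤ) ^ (l.sum - l.headD 0) * (-1) ^ (l.headD 0 + l.length - 1)
      = (-1) ^ (l.headD 0 + (colErase l.tail).headD 0)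
        * (-1) ^ ((colErase l.tail).sum - (colErase l.tail).headD 0) := by
    rw [← pow_add, ← pow_add]
    apply negpow
    omega
  have id2 : (-1 : ℤ) ^ (l.sum - l.headD 0) * (-1) ^ (l.headD 0 + l.length - 1 + l.headD 0)
      = (-1) ^ ((colErase l).sum - (colErase l).headD 0) := by
    rw [← pow_add]
    apply negpow
    omega
  calc gv e l = (-1) ^ (l.sum - l.headD 0) * e l := rfl
    _ = ((-1 : ℤ) ^ (l.sum - l.headD 0) * (-1) ^ (l.headD 0 + l.length - 1)) * e (colErase l.tail)
        + ((-1 : ℤ) ^ (l.sum - l.headD 0) * (-1) ^ (l.headD 0 + l.length - 1 + l.headD 0))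
          * (((l.headD 0 + l.length - 1 : ℕ) : ℤ) * e (colErase l)) := by
        rw [hrec l hp hne]; ring
    _ = _ := by rw [id1, id2]; unfold gv; ring

theorem gones {l : List ℕ} (hp : IsPartition l) (hne : l ≠ []) (h1 : ∀ x ∈ l, x = 1) :
    gv e l = (l.length : ℤ) - 1 := by
  have hh : l.headD 0 = 1 := by
    cases l; · simp at hne
    · exact h1 _ (by simp)
  have ht1 : ∀ x ∈ l.tail, x = 1 := fun x hx => h1 x (by
    cases l; · simp at hx
    · exact List.mem_cons_of_mem _ hx)
  have hr : 1 ≤ l.length := by cases l; · simp at hne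
                               · simp
  rw [grec h0 hrec hp hne, colErase_ones h1, colErase_ones ht1, gv_nil h0 hrec, hh]
  simp only [List.headD_nil]
  have : 1 + l.length - 1 = l.length := by omega
  rw [this]
  push_cast
  ring

theorem gsingle : gv e [1] = 0 := by
  have := gones h0 hrec (l := [1]) ⟨by simp, by simp⟩ (by simp) (by simp)
  simpa using this


set_option maxHeartbeats 4000000 in
theorem monster :
    ∀ (N : ℕ) (l : List ℕ), IsPartition l → l.sum ≤ N →
      (2 ≤ l.sum → 1 ≤ gv e l) ∧
      (2 ≤ l.length → l.headD 0 % 2 = l.tail.headD 0 % 2 →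
        ∀ j, 1 ≤ j → j < l.length → gv e (l.drop j) ≤ gv e l - 1) ∧
      (2 ≤ l.length → l.headD 0 = l.tail.headD 0 → (l.drop 2).headD 0 < l.headD 0 →
        ∀ j, 2 ≤ j → gv e (l.drop j) ≤ gv e l - gv e (l.drop 1)) := by
  intro N
  induction N with
  | zero =>
    intro l hp hs
    have hl : l = [] := sum_eq_zero hp (by omega)
    subst hl
    exact ⟨fun h => absurd h (by norm_num), fun h => absurd h (by norm_num),
      fun h => absurd h (by norm_num)⟩
  | succ N IH =>
    have nn : ∀ m, IsPartition m → m.sum ≤ N → 0 ≤ gv e m := by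
      intro m hm hms
      by_cases hge : 2 ≤ m.sum
      · linarith [(IH m hm hms).1 hge]
      · have : m.sum = 0 ∨ m.sum = 1 := by omega
        rcases this with h | h
        · rw [sum_eq_zero hm h, gv_nil h0 hrec]; norm_num
        · rw [sum_eq_one hm h, gsingle h0 hrec]
    intro l hp hsum
    by_cases hl : l = []
    · subst hl
      exact ⟨fun h => absurd h (by norm_num), fun h => absurd h (by norm_num),
        fun h => absurd h (by norm_num)⟩
    have ha1 : 1 ≤ l.headD 0 := head_pos hp hl
    have hr1 : 1 ≤ l.length := List.length_pos_iff.mpr hl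
    have hn1 : 1 ≤ l.sum := le_trans ha1 (headD_le_sum l)
    have hhook : l.headD 0 + l.length ≤ l.sum + 1 := hook_le hp
    have hrn : l.length ≤ l.sum := length_le_sum hp
    have han : l.headD 0 ≤ l.sum := headD_le_sum l
    have hμp : IsPartition (colErase l) := colErase_part hp
    have hμs : (colErase l).sum = l.sum - l.length := colErase_sum hp
    have hμh : (colErase l).headD 0 = l.headD 0 - 1 := colErase_head hp
    have hμt : colErase l.tail = (colErase l).drop 1 := by
      rw [colErase_tail hp, List.drop_one]
    have hμsN : (colErase l).sum ≤ N := by omega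
    have htp : IsPartition l.tail := part_tail hp
    have hts2 : l.tail.headD 0 ≤ l.headD 0 := head_tail_le hp
    have htlen : l.tail.length = l.length - 1 := List.length_tail
    have rec0 := grec h0 hrec hp hl
    refine ⟨?_, ?_, ?_⟩
    -- ==================== G0 ====================
    · intro hn2
      by_cases hr2 : 2 ≤ l.length
      · by_cases ha2 : 2 ≤ l.headD 0
        · have htne : l.tail ≠ [] := by
            intro h
            rw [h] at htlen; simp at htlen; omega
          have hs21 : 1 ≤ l.tail.headD 0 := head_pos htp htne
          have hμth : (colErase l.tail).headD 0 = l.tail.headD 0 - 1 := colErase_head htp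
          by_cases hs22 : 2 ≤ l.tail.headD 0
          · -- a ≥ 2, σ₂ ≥ 2
            have hμtne : colErase l.tail ≠ [] := ne_nil_of_headD (by omega)
            have hμne : colErase l ≠ [] := ne_nil_of_headD (by omega)
            have hμl2 : 2 ≤ (colErase l).length := by
              have h1 : (colErase l).tail.length = (colErase l).length - 1 := List.length_tail
              have h2 : (colErase l).tail ≠ [] := by rw [← colErase_tail hp]; exact hμtne
              have := List.length_pos_iff.mpr h2
              have := List.length_pos_iff.mpr hμne
              omega
            have hμs2 : 2 ≤ (colErase l).sum := le_trans hμl2 (length_le_sum hμp)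
            have hb0 : 1 ≤ gv e (colErase l) := (IH _ hμp hμsN).1 hμs2
            rcases pm (l.headD 0 + (colErase l.tail).headD 0) with ⟨hpw, hpar⟩ | ⟨hpw, hpar⟩
            · rw [hpw] at rec0
              have hμtnn : 0 ≤ gv e (colErase l.tail) := by
                apply nn _ (colErase_part htp)
                calc (colErase l.tail).sum = ((colErase l).drop 1).sum := by rw [hμt]
                  _ ≤ (colErase l).sum := sum_drop_le _ 1
                  _ ≤ N := hμsN
              have hH : (3:ℤ) ≤ ((l.headD 0 + l.length - 1 : ℕ):ℤ) := by omega
              have p : (3:ℤ) * 1 ≤ ((l.headD 0 + l.length - 1 : ℕ):ℤ) * gv e (colErase l) :=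
                mul_le_mul hH hb0 (by norm_num) (by linarith)
              rw [rec0]
              linarith
            · rw [hpw] at rec0
              have hμXp : (colErase l).headD 0 % 2 = (colErase l).tail.headD 0 % 2 := by
                have h2 : (colErase l).tail.headD 0 = l.tail.headD 0 - 1 := by
                  rw [← colErase_tail hp]; exact hμth
                omega
              have hb1 := (IH _ hμp hμsN).2.1 hμl2 hμXp 1 le_rfl (by omega)
              rw [hμt] at rec0
              have hH : (3:ℤ) ≤ ((l.headD 0 + l.length - 1 : ℕ):ℤ) := by omega
              have p := mul_le_mul_of_nonneg_right hH
                (show (0:ℤ) ≤ gv e (colErase l) by linarith)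
              rw [rec0]
              linarith
          · -- a ≥ 2, σ₂ = 1
            have ht1 : ∀ x ∈ l.tail, x = 1 := all_ones htp (by omega)
            have hμtnil : colErase l.tail = [] := colErase_ones ht1
            rw [hμtnil, gv_nil h0 hrec] at rec0
            simp only [List.headD_nil] at rec0
            have htsum : l.tail.sum = l.tail.length := ones_sum ht1
            have hst : l.sum = l.headD 0 + l.tail.sum := sum_tail
            rcases pm (l.headD 0 + 0) with ⟨hpw, hpar⟩ | ⟨hpw, hpar⟩
            · rw [hpw] at rec0
              have hμnn : 0 ≤ gv e (colErase l) := nn _ hμp hμsN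
              have hHnn : (0:ℤ) ≤ ((l.headD 0 + l.length - 1 : ℕ):ℤ) := by omega
              have p : (0:ℤ) ≤ ((l.headD 0 + l.length - 1 : ℕ):ℤ) * gv e (colErase l) :=
                mul_nonneg hHnn hμnn
              rw [rec0]
              linarith
            · have ha3 : 3 ≤ l.headD 0 := by omega
              have hb0 : 1 ≤ gv e (colErase l) := (IH _ hμp hμsN).1 (by omega)
              have hH : (4:ℤ) ≤ ((l.headD 0 + l.length - 1 : ℕ):ℤ) := by omega
              have p : (4:ℤ) * 1 ≤ ((l.headD 0 + l.length - 1 : ℕ):ℤ) * gv e (colErase l) :=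
                mul_le_mul hH hb0 (by norm_num) (by linarith)
              rw [hpw] at rec0; rw [rec0]
              linarith
        · -- a = 1 : all ones
          have h1 : ∀ x ∈ l, x = 1 := all_ones hp (by omega)
          rw [gones h0 hrec hp hl h1]
          have hos : l.sum = l.length := ones_sum h1
          omega
      · -- r = 1
        have hr : l.length = 1 := by omega
        obtain ⟨x, rfl⟩ := List.length_eq_one_iff.mp hr
        have hsx : List.sum [x] = x := by simp
        have hx2 : 2 ≤ x := by omega
        have hcx : colErase [x] = [x-1] := colErase_cons hx2
        have htx : List.tail [x] = [] := rfl
        have hnil : colErase ([] : List ℕ) = [] := rfl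
        rw [htx, hnil, hcx, gv_nil h0 hrec] at rec0
        simp only [List.headD_cons, List.headD_nil, List.length_cons,
          List.length_nil] at rec0
        by_cases hx3 : 3 ≤ x
        · have hp' : IsPartition [x-1] := ⟨by simp, by intro y hy; simp at hy; omega⟩
          have hsx' : List.sum [x-1] = x - 1 := by simp
          have hb0 : 1 ≤ gv e [x-1] := (IH _ hp' (by omega)).1 (by omega)
          have hH : (3:ℤ) ≤ ((x + 1 - 1 : ℕ):ℤ) := by omega
          have p : (3:ℤ) * 1 ≤ ((x + 1 - 1 : ℕ):ℤ) * gv e [x-1] :=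
            mul_le_mul hH hb0 (by norm_num) (by linarith)
          rcases pm (x + 0) with ⟨hpw,_⟩ | ⟨hpw,_⟩ <;> rw [hpw] at rec0 <;> rw [rec0] <;>
            linarith
        · have hx : x = 2 := by omega
          subst hx
          have h21 : (2 - 1 : ℕ) = 1 := rfl
          rw [h21, gsingle h0 hrec] at rec0
          rw [rec0]
          norm_num
    -- ==================== G1 ====================
    · intro hr2 hpar j hj1 hjr
      have htne : l.tail ≠ [] := by
        intro h; rw [h] at htlen; simp at htlen; omega
      have hs21 : 1 ≤ l.tail.headD 0 := head_pos htp htne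
      have hμth : (colErase l.tail).headD 0 = l.tail.headD 0 - 1 := colErase_head htp
      have htjl : (l.drop j).length = l.length - j := by simp
      have htjne : l.drop j ≠ [] := by
        intro h; rw [h] at htjl; simp at htjl; omega
      have htjp : IsPartition (l.drop j) := part_drop hp j
      have htjh : (l.drop j).headD 0 ≤ l.headD 0 := headD_drop_le hp j
      have recj := grec h0 hrec htjp htjne
      rw [List.tail_drop] at recj
      rw [colErase_drop hp j, colErase_drop hp (j+1)] at recj
      by_cases ha2 : 2 ≤ l.headD 0
      · by_cases hs22 : 2 ≤ l.tail.headD 0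
        · -- ===== Case A =====
          have hμtne : colErase l.tail ≠ [] := ne_nil_of_headD (by omega)
          have hμne : colErase l ≠ [] := ne_nil_of_headD (by omega)
          have hμl2 : 2 ≤ (colErase l).length := by
            have h1 : (colErase l).tail.length = (colErase l).length - 1 := List.length_tail
            have h2 : (colErase l).tail ≠ [] := by rw [← colErase_tail hp]; exact hμtne
            have := List.length_pos_iff.mpr h2
            have := List.length_pos_iff.mpr hμne
            omega
          have hμs2 : 2 ≤ (colErase l).sum := le_trans hμl2 (length_le_sum hμp)
          have hμteq : (colErase l).tail.headD 0 = l.tail.headD 0 - 1 := by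
            rw [← colErase_tail hp]; exact hμth
          have hμXp : (colErase l).headD 0 % 2 = (colErase l).tail.headD 0 % 2 := by omega
          have IHμ := IH _ hμp hμsN
          have hb0 : 1 ≤ gv e (colErase l) := IHμ.1 hμs2
          have hb1 : gv e ((colErase l).drop 1) ≤ gv e (colErase l) - 1 :=
            IHμ.2.1 hμl2 hμXp 1 le_rfl (by omega)
          have hble : ∀ i, 1 ≤ i → gv e ((colErase l).drop i) ≤ gv e (colErase l) := by
            intro i hi
            by_cases hi2 : i < (colErase l).length
            · linarith [IHμ.2.1 hμl2 hμXp i hi hi2]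
            · rw [List.drop_eq_nil_of_le (by omega), gv_nil h0 hrec]; linarith
          have hbnn : ∀ i, 0 ≤ gv e ((colErase l).drop i) := fun i =>
            nn _ (part_drop hμp i) (le_trans (sum_drop_le _ i) hμsN)
          have hH3 : (3:ℤ) ≤ ((l.headD 0 + l.length - 1 : ℕ):ℤ) := by omega
          rcases pm (l.headD 0 + (colErase l.tail).headD 0) with ⟨hpw, hpar2⟩ | ⟨hpw, _⟩
          · omega
          · rw [hpw, hμt] at rec0
            rcases pm ((l.drop j).headD 0 + ((colErase l).drop (j+1)).headD 0) with
              ⟨hpwj, hmj⟩ | ⟨hpwj, _⟩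
            · -- εj = +1
              rw [hpwj] at recj
              by_cases hHj : (l.drop j).headD 0 + (l.drop j).length - 1 + 2
                  ≤ l.headD 0 + l.length - 1
              · -- easy subcase
                have c1 : (((l.drop j).headD 0 + (l.drop j).length - 1 : ℕ):ℤ)
                    ≤ ((l.headD 0 + l.length - 1 : ℕ):ℤ) - 2 := by omega
                have p1 : (((l.drop j).headD 0 + (l.drop j).length - 1 : ℕ):ℤ)
                      * gv e ((colErase l).drop j)
                    ≤ (((l.headD 0 + l.length - 1 : ℕ):ℤ) - 2) * gv e (colErase l) :=
                  mul_le_mul c1 (hble j hj1) (hbnn j) (by linarith)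
                rw [recj, rec0]
                linarith [hble (j+1) (by omega), hb0, hb1, p1]
              · -- hard subcase : j = 1, σ₂ = a, σ₃ < σ₂
                have hd1h : (l.drop 1).headD 0 = l.tail.headD 0 := by rw [List.drop_one]
                have hd1l : (l.drop 1).length = l.length - 1 := by simp
                have hj : j = 1 := by omega
                subst hj
                simp only [show (1+1 : ℕ) = 2 from rfl] at recj hmj
                have hs2a : l.tail.headD 0 = l.headD 0 := by omega
                have hd2p : IsPartition (l.drop 2) := part_drop hp 2
                have hμ2h : ((colErase l).drop 2).headD 0 = (l.drop 2).headD 0 - 1 := by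
                  rw [← colErase_drop hp 2]; exact colErase_head hd2p
                have hs3le : (l.drop 2).headD 0 ≤ l.tail.headD 0 := by
                  have h5 := headD_drop_le htp 1
                  have h6 : l.tail.drop 1 = l.drop 2 := by
                    rw [List.drop_tail]
                  rw [h6] at h5
                  exact h5
                have hs3 : (l.drop 2).headD 0 < l.tail.headD 0 := by
                  rcases Nat.lt_or_ge ((l.drop 2).headD 0) (l.tail.headD 0) with h | h
                  · exact h
                  · exfalso; omega
                have hb2 : gv e ((colErase l).drop 2)
                    ≤ gv e (colErase l) - gv e ((colErase l).drop 1) :=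
                  IHμ.2.2 hμl2 (by omega) (by omega) 2 le_rfl
                rw [recj, rec0]
                have hHjv : ((((l.drop 1).headD 0 + (l.drop 1).length - 1 : ℕ)):ℤ)
                    = ((l.headD 0 + l.length - 1 : ℕ):ℤ) - 1 := by omega
                rw [hHjv]
                have d1 : 1 ≤ gv e (colErase l) - gv e ((colErase l).drop 1) := by linarith
                have pp : (((l.headD 0 + l.length - 1 : ℕ):ℤ) - 1) * 1
                    ≤ (((l.headD 0 + l.length - 1 : ℕ):ℤ) - 1) *
                      (gv e (colErase l) - gv e ((colErase l).drop 1)) :=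
                  mul_le_mul_of_nonneg_left d1 (by linarith)
                linarith [hb2, hb1, hb0, hbnn 1, hbnn 2, pp, hH3]
            · -- εj = −1
              rw [hpwj] at recj
              have c1 : (((l.drop j).headD 0 + (l.drop j).length - 1 : ℕ):ℤ)
                  ≤ ((l.headD 0 + l.length - 1 : ℕ):ℤ) - 1 := by omega
              have p1 : (((l.drop j).headD 0 + (l.drop j).length - 1 : ℕ):ℤ)
                    * gv e ((colErase l).drop j)
                  ≤ (((l.headD 0 + l.length - 1 : ℕ):ℤ) - 1) * gv e (colErase l) :=
                mul_le_mul c1 (hble j hj1) (hbnn j) (by linarith)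
              rw [recj, rec0]
              linarith [hbnn (j+1), hb1, hb0, p1]
        · -- ===== Case B : σ₂ = 1, a odd ≥ 3 =====
          have ha3 : 3 ≤ l.headD 0 := by omega
          have ht1 : ∀ x ∈ l.tail, x = 1 := all_ones htp (by omega)
          have hμtnil : colErase l.tail = [] := colErase_ones ht1
          have hμne : colErase l ≠ [] := ne_nil_of_headD (by omega)
          have htsum : l.tail.sum = l.tail.length := ones_sum ht1
          have hst : l.sum = l.headD 0 + l.tail.sum := sum_tail
          have hb0 : 1 ≤ gv e (colErase l) := (IH _ hμp hμsN).1 (by omega)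
          rw [hμtnil, gv_nil h0 hrec] at rec0
          simp only [List.headD_nil] at rec0
          rcases pm (l.headD 0 + 0) with ⟨hpw, hpm'⟩ | ⟨hpw, _⟩
          · omega
          · rw [hpw] at rec0
            have htj1 : ∀ x ∈ l.drop j, x = 1 := by
              intro x hx
              apply ht1
              have h7 : l.tail.drop (j-1) = l.drop j := by
                rw [List.drop_tail]
                congr 1
                omega
              rw [← h7] at hx
              exact List.mem_of_mem_drop hx
            have hgj : gv e (l.drop j) = ((l.drop j).length : ℤ) - 1 :=
              gones h0 hrec htjp htjne htj1
            rw [hgj, rec0, htjl]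
            have p : ((l.headD 0 + l.length - 1:ℕ):ℤ) * 1
                ≤ ((l.headD 0 + l.length - 1:ℕ):ℤ) * gv e (colErase l) :=
              mul_le_mul_of_nonneg_left hb0 (by omega)
            have c2 : ((l.length - j:ℕ):ℤ) ≤ (l.length:ℤ) - 1 := by omega
            have hHr : (l.length:ℤ) + 2 ≤ ((l.headD 0 + l.length - 1:ℕ):ℤ) := by omega
            linarith
      · -- ===== a = 1 : all ones =====
        have h1 : ∀ x ∈ l, x = 1 := all_ones hp (by omega)
        have hgl : gv e l = (l.length:ℤ) - 1 := gones h0 hrec hp hl h1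
        have htj1 : ∀ x ∈ l.drop j, x = 1 := fun x hx => h1 x (List.mem_of_mem_drop hx)
        have hgj : gv e (l.drop j) = ((l.drop j).length : ℤ) - 1 :=
          gones h0 hrec htjp htjne htj1
        rw [hgj, hgl, htjl]
        omega
    -- ==================== G2 ====================
    · intro hr2 heq hs3 j hj2
      have htne : l.tail ≠ [] := by
        intro h; rw [h] at htlen; simp at htlen; omega
      have hs21 : 1 ≤ l.tail.headD 0 := head_pos htp htne
      have hμth : (colErase l.tail).headD 0 = l.tail.headD 0 - 1 := colErase_head htp
      have hd1h : (l.drop 1).headD 0 = l.tail.headD 0 := by rw [List.drop_one]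
      have hd1l : (l.drop 1).length = l.length - 1 := by simp
      have ht1ne : l.drop 1 ≠ [] := by
        intro h; rw [h] at hd1l; simp at hd1l; omega
      have rec1 := grec h0 hrec (part_drop hp 1) ht1ne
      rw [List.tail_drop] at rec1
      rw [colErase_drop hp 1, colErase_drop hp 2] at rec1
      by_cases ha2 : 2 ≤ l.headD 0
      · -- main case : σ₂ = a ≥ 2
        have hμtne : colErase l.tail ≠ [] := ne_nil_of_headD (by omega)
        have hμne : colErase l ≠ [] := ne_nil_of_headD (by omega)
        have hμl2 : 2 ≤ (colErase l).length := by
          have h1 : (colErase l).tail.length = (colErase l).length - 1 := List.length_tail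
          have h2 : (colErase l).tail ≠ [] := by rw [← colErase_tail hp]; exact hμtne
          have := List.length_pos_iff.mpr h2
          have := List.length_pos_iff.mpr hμne
          omega
        have hμs2 : 2 ≤ (colErase l).sum := le_trans hμl2 (length_le_sum hμp)
        have hμteq : (colErase l).tail.headD 0 = l.tail.headD 0 - 1 := by
          rw [← colErase_tail hp]; exact hμth
        have hμXp : (colErase l).headD 0 % 2 = (colErase l).tail.headD 0 % 2 := by omega
        have hμ2h : ((colErase l).drop 2).headD 0 = (l.drop 2).headD 0 - 1 := by
          rw [← colErase_drop hp 2]; exact colErase_head (part_drop hp 2)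
        have IHμ := IH _ hμp hμsN
        have hb0 : 1 ≤ gv e (colErase l) := IHμ.1 hμs2
        have hb1 : gv e ((colErase l).drop 1) ≤ gv e (colErase l) - 1 :=
          IHμ.2.1 hμl2 hμXp 1 le_rfl (by omega)
        have hbP2 : ∀ i, 2 ≤ i → gv e ((colErase l).drop i)
            ≤ gv e (colErase l) - gv e ((colErase l).drop 1) :=
          fun i hi => IHμ.2.2 hμl2 (by omega) (by omega) i hi
        have hbnn : ∀ i, 0 ≤ gv e ((colErase l).drop i) := fun i =>
          nn _ (part_drop hμp i) (le_trans (sum_drop_le _ i) hμsN)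
        have hH4 : (3:ℤ) ≤ ((l.headD 0 + l.length - 1 : ℕ):ℤ) := by omega
        rcases pm (l.headD 0 + (colErase l.tail).headD 0) with ⟨hpw, hpar2⟩ | ⟨hpw, _⟩
        · exfalso; omega
        · rw [hpw, hμt] at rec0
          have hH1v : (((l.drop 1).headD 0 + (l.drop 1).length - 1 : ℕ):ℤ)
              = ((l.headD 0 + l.length - 1 : ℕ):ℤ) - 1 := by omega
          rw [hH1v] at rec1
          by_cases hjr : j < l.length
          · have htjl : (l.drop j).length = l.length - j := by simp
            have htjne : l.drop j ≠ [] := by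
              intro h; rw [h] at htjl; simp at htjl; omega
            have htjp := part_drop hp j
            have recj := grec h0 hrec htjp htjne
            rw [List.tail_drop] at recj
            rw [colErase_drop hp j, colErase_drop hp (j+1)] at recj
            have htjh3 : (l.drop j).headD 0 ≤ (l.drop 2).headD 0 := by
              have h8 := headD_drop_le (part_drop hp 2) (j-2)
              rw [List.drop_drop] at h8
              have h9 : 2 + (j - 2) = j := by omega
              rw [h9] at h8
              exact h8
            have cj : (((l.drop j).headD 0 + (l.drop j).length - 1 : ℕ):ℤ)
                ≤ ((l.headD 0 + l.length - 1 : ℕ):ℤ) - 3 := by omega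
            have pj : (((l.drop j).headD 0 + (l.drop j).length - 1 : ℕ):ℤ)
                  * gv e ((colErase l).drop j)
                ≤ (((l.headD 0 + l.length - 1 : ℕ):ℤ) - 3) *
                  (gv e (colErase l) - gv e ((colErase l).drop 1)) :=
              mul_le_mul cj (hbP2 j hj2) (hbnn j) (by linarith)
            rw [recj, rec0, rec1]
            rcases pm ((l.drop 1).headD 0 + ((colErase l).drop 2).headD 0) with
                ⟨hp1,_⟩|⟨hp1,_⟩ <;>
              rw [hp1] <;>
              (rcases pm ((l.drop j).headD 0 + ((colErase l).drop (j+1)).headD 0) with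
                  ⟨hpj,_⟩|⟨hpj,_⟩ <;> rw [hpj] <;>
                linarith [hbP2 (j+1) (by omega), hbP2 2 le_rfl, hbnn (j+1), hbnn 2,
                  pj, hb1, hb0, hH4])
          · have hnilj : l.drop j = [] := List.drop_eq_nil_of_le (by omega)
            rw [hnilj, gv_nil h0 hrec, rec0, rec1]
            have d1 : 1 ≤ gv e (colErase l) - gv e ((colErase l).drop 1) := by linarith
            have pp : (((l.headD 0 + l.length - 1 : ℕ):ℤ) - 1) * 1
                ≤ (((l.headD 0 + l.length - 1 : ℕ):ℤ) - 1) *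
                  (gv e (colErase l) - gv e ((colErase l).drop 1)) :=
              mul_le_mul_of_nonneg_left d1 (by linarith)
            rcases pm ((l.drop 1).headD 0 + ((colErase l).drop 2).headD 0) with
                ⟨hp1,_⟩|⟨hp1,_⟩ <;>
              rw [hp1] <;> linarith [hbP2 2 le_rfl, hbnn 2, pp, hb1, hb0, hH4]
      · -- a = 1 : l = [1,1]
        have hd2 : l.drop 2 = [] := by
          by_contra h
          have := head_pos (part_drop hp 2) h
          omega
        have hd2l : (l.drop 2).length = l.length - 2 := by simp
        have hlen2 : l.length = 2 := by
          rw [hd2] at hd2l; simp at hd2l; omega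
        have h1 : ∀ x ∈ l, x = 1 := all_ones hp (by omega)
        have hgl : gv e l = (l.length:ℤ) - 1 := gones h0 hrec hp hl h1
        have hgt1 : gv e (l.drop 1) = ((l.drop 1).length:ℤ) - 1 :=
          gones h0 hrec (part_drop hp 1) ht1ne (fun x hx => h1 x (List.mem_of_mem_drop hx))
        have hdj : l.drop j = [] := List.drop_eq_nil_of_le (by omega)
        rw [hdj, gv_nil h0 hrec, hgl, hgt1, hd1l, hlen2]
        norm_num


end
end SignProof

theorem stmt_15 (e : List ℕ → ℤ) (h0 : e [] = 1)
    (hrec : ∀ l : List ℕ, IsPartition l → l ≠ [] →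
      e l = (-1) ^ (l.headD 0 + l.length - 1) * e (colErase l.tail)
        + (-1) ^ (l.headD 0 + l.length - 1 + l.headD 0)
          * ((l.headD 0 + l.length - 1 : ℕ) : ℤ) * e (colErase l)) :
    ∀ l : List ℕ, IsPartition l → 2 ≤ l.sum →
      e l ≠ 0 ∧ (0 < e l ↔ Even (l.sum - l.headD 0)) := by
  intro l hp hs
  have hg : 1 ≤ SignProof.gv e l :=
    (SignProof.monster h0 hrec l.sum l hp le_rfl).1 hs
  have hgv : SignProof.gv e l = (-1) ^ (l.sum - l.headD 0) * e l := rfl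
  rcases SignProof.pm (l.sum - l.headD 0) with ⟨hpw, hm⟩ | ⟨hpw, hm⟩
  · rw [hpw, one_mul] at hgv
    refine ⟨fun h => by rw [h] at hgv; omega, ?_, fun _ => by rw [← hgv]; linarith⟩
    intro _
    exact Nat.even_iff.mpr hm
  · rw [hpw] at hgv
    have he : e l ≤ -1 := by linarith
    refine ⟨fun h => by rw [h] at hgv; simp at hgv; omega, fun h => absurd h (by linarith), ?_⟩
    intro h
    exact absurd (Nat.even_iff.mp h) (by omega)
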